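/- Let f be a convex function on [0,1]^d with |f| ≤ 1, and for x in the interior let m_f(x) be any subgradient of f at x. Then for any 0 < ρ < 1/2, ∫_{[ρ,1-ρ]^d} |m_f(x)| dx ≤ 8d, where |·| is the Euclidean norm on ℝ^d. -/

import Mathlib

open MeasureTheory Set intervalIntegral

/-- Core 1-d lemma: a monotone function whose tail interval integrals are ≤ 2
has positive-part integral ≤ 2. -/
lemma mono_pos_part (a : ℝ → ℝ) (r s : ℝ) (hrs : r ≤ s)
    (ha : MonotoneOn a (Icc r s))
    (key : ∀ c, c ∈ Icc r s → ∫ t in c..s, a t ≤ 2) :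
    ∫ t in r..s, max (a t) 0 ≤ 2 := by
  by_cases hpos : ∃ t ∈ Icc r s, 0 < a t
  · obtain ⟨t₀, ht₀, ht₀pos⟩ := hpos
    set S : Set ℝ := {t ∈ Icc r s | 0 < a t} with hS
    have hne : S.Nonempty := ⟨t₀, ht₀, ht₀pos⟩
    have hbdd : BddBelow S := ⟨r, fun t ht => ht.1.1⟩
    set c := sInf S with hc
    have hcr : r ≤ c := le_csInf hne fun t ht => ht.1.1
    have hcs : c ≤ s := le_trans (csInf_le hbdd ⟨ht₀, ht₀pos⟩) ht₀.2
    have hcI : c ∈ Icc r s := ⟨hcr, hcs⟩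
    have hapos : ∀ t ∈ Ioc c s, max (a t) 0 = a t := by
      intro t ht
      obtain ⟨u, huS, hu⟩ := exists_lt_of_csInf_lt hne ht.1
      have htI : t ∈ Icc r s := ⟨le_trans huS.1.1 (le_of_lt hu), ht.2⟩
      exact max_eq_left (le_of_lt (lt_of_lt_of_le huS.2 (ha huS.1 htI (le_of_lt hu))))
    have haneg : ∀ t ∈ Ioo r c, max (a t) 0 = 0 := by
      intro t ht
      have : a t ≤ 0 := by
        by_contra h
        exact absurd (csInf_le hbdd ⟨⟨le_of_lt ht.1, le_trans (le_of_lt ht.2) hcs⟩,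
          lt_of_not_ge h⟩) (not_le.2 ht.2)
      exact max_eq_right this
    have hint : ∀ u v, u ∈ Icc r s → v ∈ Icc r s →
        IntervalIntegrable (fun t => max (a t) 0) volume u v := by
      intro u v hu hv
      apply MonotoneOn.intervalIntegrable
      intro x hx y hy hxy
      have hsub : uIcc u v ⊆ Icc r s := uIcc_subset_Icc hu hv
      exact max_le_max (ha (hsub hx) (hsub hy) hxy) le_rfl
    have split : (∫ t in r..s, max (a t) 0) =
        (∫ t in r..c, max (a t) 0) + ∫ t in c..s, max (a t) 0 := by
      rw [integral_add_adjacent_intervals (hint r c ⟨le_refl r, hrs⟩ hcI)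
        (hint c s hcI ⟨hrs, le_refl s⟩)]
    have h1 : (∫ t in r..c, max (a t) 0) = 0 := by
      rw [integral_of_le hcr]
      rw [← MeasureTheory.restrict_Ioo_eq_restrict_Ioc]
      rw [MeasureTheory.setIntegral_congr_fun measurableSet_Ioo haneg]
      simp
    have h2 : (∫ t in c..s, max (a t) 0) = ∫ t in c..s, a t := by
      rw [integral_of_le hcs, integral_of_le hcs]
      exact MeasureTheory.setIntegral_congr_fun measurableSet_Ioc hapos
    rw [split, h1, h2, zero_add]
    exact key c hcI
  · push_neg at hpos
    have : (∫ t in r..s, max (a t) 0) = 0 := by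
      rw [integral_of_le hrs]
      rw [MeasureTheory.setIntegral_congr_fun measurableSet_Ioc
        (fun t ht => max_eq_right (hpos t ⟨le_of_lt ht.1, ht.2⟩))]
      simp
    rw [this]; norm_num

open MeasureTheory Set intervalIntegral

lemma convexon_integrableOn (g : ℝ → ℝ) (hg : ConvexOn ℝ (Icc 0 1) g)
    (hgb : ∀ t ∈ Icc (0:ℝ) 1, |g t| ≤ 1) : IntegrableOn g (Icc 0 1) := by
  have hcont : ContinuousOn g (Ioo 0 1) :=
    (hg.subset Ioo_subset_Icc_self (convex_Ioo 0 1)).continuousOn isOpen_Ioo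
  have hmeas : AEStronglyMeasurable g (volume.restrict (Icc (0:ℝ) 1)) := by
    rw [← Measure.restrict_congr_set Ioo_ae_eq_Icc]
    exact hcont.aestronglyMeasurable measurableSet_Ioo
  refine Integrable.mono' (integrable_const 1) hmeas ?_
  exact (ae_restrict_iff' measurableSet_Icc).2 (.of_forall fun t ht => by
    simpa [Real.norm_eq_abs] using hgb t ht)

lemma slice_fwd (g : ℝ → ℝ) (hg : ConvexOn ℝ (Icc 0 1) g)
    (hgb : ∀ t ∈ Icc (0:ℝ) 1, |g t| ≤ 1) {ρ : ℝ} (hρ : 0 < ρ) (hρ2 : ρ < 1/2) :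
    ∫ t in Icc ρ (1-ρ), max ((g (t+ρ) - g t)/ρ) 0 ≤ 2 := by
  have hr2 : ρ ≤ 1 - ρ := by linarith
  have hgi := convexon_integrableOn g hg hgb
  have hii : ∀ u v, u ∈ Icc (0:ℝ) 1 → v ∈ Icc (0:ℝ) 1 →
      IntervalIntegrable g volume u v := fun u v hu hv =>
    intervalIntegrable_iff.mpr
      (hgi.mono_set (Set.uIoc_subset_uIcc.trans (uIcc_subset_Icc hu hv)))
  -- monotonicity of the slope-difference
  have hmono : MonotoneOn (fun t => (g (t+ρ) - g t)/ρ) (Icc ρ (1-ρ)) := by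
    intro u hu v hv huv
    rcases eq_or_lt_of_le huv with rfl | huv
    · exact le_rfl
    have m1 : u ∈ Icc (0:ℝ) 1 := ⟨by linarith [hu.1], by linarith [hu.2]⟩
    have m2 : u + ρ ∈ Icc (0:ℝ) 1 := ⟨by linarith [hu.1], by linarith [hu.2]⟩
    have m3 : v ∈ Icc (0:ℝ) 1 := ⟨by linarith [hv.1], by linarith [hv.2]⟩
    have m4 : v + ρ ∈ Icc (0:ℝ) 1 := ⟨by linarith [hv.1], by linarith [hv.2]⟩
    have s1 : (g (u+ρ) - g u)/((u+ρ)-u) ≤ (g (v+ρ) - g u)/((v+ρ)-u) :=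
      hg.secant_mono m1 m2 m4 (by linarith) (by linarith) (by linarith)
    have s2 : (g u - g (v+ρ))/(u-(v+ρ)) ≤ (g v - g (v+ρ))/(v-(v+ρ)) :=
      hg.secant_mono m4 m1 m3 (by linarith) (by linarith) (by linarith)
    have e1 : (g (v+ρ) - g u)/((v+ρ)-u) = (g u - g (v+ρ))/(u-(v+ρ)) := by
      rw [← neg_div_neg_eq]; ring_nf
    have d1 : (g (u+ρ) - g u)/((u+ρ)-u) = (g (u+ρ) - g u)/ρ := by
      rw [add_sub_cancel_left]
    have d2 : (g v - g (v+ρ))/(v-(v+ρ)) = (g (v+ρ) - g v)/ρ := by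
      rw [← neg_div_neg_eq]; ring_nf
    calc (g (u+ρ) - g u)/ρ = (g (u+ρ) - g u)/((u+ρ)-u) := d1.symm
      _ ≤ (g (v+ρ) - g u)/((v+ρ)-u) := s1
      _ = (g u - g (v+ρ))/(u-(v+ρ)) := e1
      _ ≤ (g v - g (v+ρ))/(v-(v+ρ)) := s2
      _ = (g (v+ρ) - g v)/ρ := d2
  -- tail integral bound
  have key : ∀ c, c ∈ Icc ρ (1-ρ) → ∫ t in c..(1-ρ), (g (t+ρ) - g t)/ρ ≤ 2 := by
    intro c hc
    have hshift : IntervalIntegrable (fun t => g (t+ρ)) volume c (1-ρ) := by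
      have := (hii (c+ρ) 1 ⟨by linarith [hc.1], by linarith [hc.2]⟩
        ⟨by linarith, le_refl 1⟩).comp_add_right ρ
      simpa using this
    have hsplit : (∫ t in c..(1-ρ), (g (t+ρ) - g t)/ρ)
        = ((∫ t in c..(1-ρ), g (t+ρ)) - ∫ t in c..(1-ρ), g t)/ρ := by
      rw [← integral_sub hshift (hii c (1-ρ) ⟨by linarith [hc.1], by linarith [hc.2]⟩
        ⟨by linarith, by linarith⟩), intervalIntegral.integral_div]
    have hcomp : (∫ t in c..(1-ρ), g (t+ρ)) = ∫ t in (c+ρ)..1, g t := by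
      rw [integral_comp_add_right]
      norm_num
    have hmem : ∀ u ∈ ({c, c+ρ, 1-ρ, 1} : Set ℝ), u ∈ Icc (0:ℝ) 1 := by
      intro u hu
      rcases hu with rfl | rfl | rfl | rfl
      · exact ⟨by linarith [hc.1], by linarith [hc.2]⟩
      · exact ⟨by linarith [hc.1], by linarith [hc.2]⟩
      · exact ⟨by linarith, by linarith⟩
      · exact ⟨by linarith, le_refl 1⟩
    have c1 : (∫ t in (c+ρ)..1, g t)
        = (∫ t in (c+ρ)..(1-ρ), g t) + ∫ t in (1-ρ)..1, g t :=
      (integral_add_adjacent_intervals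
        (hii _ _ (hmem _ (by simp)) (hmem _ (by simp)))
        (hii _ _ (hmem _ (by simp)) (hmem _ (by simp)))).symm
    have c2 : (∫ t in c..(1-ρ), g t)
        = (∫ t in c..(c+ρ), g t) + ∫ t in (c+ρ)..(1-ρ), g t :=
      (integral_add_adjacent_intervals
        (hii _ _ (hmem _ (by simp)) (hmem _ (by simp)))
        (hii _ _ (hmem _ (by simp)) (hmem _ (by simp)))).symm
    have b1 : ‖∫ t in (1-ρ)..1, g t‖ ≤ 1 * |1 - (1-ρ)| := by
      apply intervalIntegral.norm_integral_le_of_norm_le_const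
      intro x hx
      rw [uIoc_of_le (by linarith : (1:ℝ)-ρ ≤ 1)] at hx
      simpa [Real.norm_eq_abs] using hgb x ⟨by linarith [hx.1], hx.2⟩
    have b2 : ‖∫ t in c..(c+ρ), g t‖ ≤ 1 * |c + ρ - c| := by
      apply intervalIntegral.norm_integral_le_of_norm_le_const
      intro x hx
      rw [uIoc_of_le (by linarith : c ≤ c + ρ)] at hx
      have : x ∈ Icc (0:ℝ) 1 := ⟨by linarith [hx.1, hc.1], by linarith [hx.2, hc.2]⟩
      simpa [Real.norm_eq_abs] using hgb x this
    rw [hsplit, hcomp, c1, c2, div_le_iff₀ hρ]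
    rw [Real.norm_eq_abs] at b1 b2
    have a1 : |1 - (1-ρ)| = ρ := by rw [abs_of_nonneg] <;> linarith
    have a2 : |c + ρ - c| = ρ := by rw [abs_of_nonneg] <;> linarith
    rw [a1] at b1; rw [a2] at b2
    obtain ⟨l1, r1⟩ := abs_le.1 b1
    obtain ⟨l2, r2⟩ := abs_le.1 b2
    linarith
  -- assemble via mono_pos_part
  rw [MeasureTheory.integral_Icc_eq_integral_Ioc, ← intervalIntegral.integral_of_le hr2]
  exact mono_pos_part _ ρ (1-ρ) hr2 hmono key

lemma slice_bwd (g : ℝ → ℝ) (hg : ConvexOn ℝ (Icc 0 1) g)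
    (hgb : ∀ t ∈ Icc (0:ℝ) 1, |g t| ≤ 1) {ρ : ℝ} (hρ : 0 < ρ) (hρ2 : ρ < 1/2) :
    ∫ t in Icc ρ (1-ρ), max ((g (t-ρ) - g t)/ρ) 0 ≤ 2 := by
  have hr2 : ρ ≤ 1 - ρ := by linarith
  set g1 : ℝ → ℝ := fun t => g (1 - t) with hg1
  have h1 : ∀ x ∈ Icc (0:ℝ) 1, (1 - x) ∈ Icc (0:ℝ) 1 :=
    fun x hx => ⟨by linarith [hx.2], by linarith [hx.1]⟩
  have hg1c : ConvexOn ℝ (Icc 0 1) g1 := by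
    refine ⟨convex_Icc 0 1, fun x hx y hy a b ha hb hab => ?_⟩
    have e : (1:ℝ) - (a • x + b • y) = a • (1-x) + b • (1-y) := by
      simp only [smul_eq_mul]; linear_combination -hab
    calc g1 (a • x + b • y) = g (a • (1-x) + b • (1-y)) := by rw [hg1]; simp only; rw [e]
      _ ≤ a * g (1-x) + b * g (1-y) := hg.2 (h1 x hx) (h1 y hy) ha hb hab
      _ = a • g1 x + b • g1 y := by simp [hg1]
  have hg1b : ∀ t ∈ Icc (0:ℝ) 1, |g1 t| ≤ 1 := fun t ht => hgb _ (h1 t ht)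
  have main := slice_fwd g1 hg1c hg1b hρ hρ2
  set φ : ℝ → ℝ := fun t => max ((g1 (t+ρ) - g1 t)/ρ) 0 with hφ
  have hpt : ∀ t : ℝ, max ((g (t-ρ) - g t)/ρ) 0 = φ (1 - t) := by
    intro t
    simp only [hφ, hg1]
    ring_nf
  calc ∫ t in Icc ρ (1-ρ), max ((g (t-ρ) - g t)/ρ) 0
      = ∫ t in Icc ρ (1-ρ), φ (1 - t) := by
        apply MeasureTheory.setIntegral_congr_fun measurableSet_Icc
        intro t _; exact hpt t
    _ = ∫ t in ρ..(1-ρ), φ (1 - t) := by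
        rw [MeasureTheory.integral_Icc_eq_integral_Ioc,
          ← intervalIntegral.integral_of_le hr2]
    _ = ∫ t in (1-(1-ρ))..(1-ρ), φ t := intervalIntegral.integral_comp_sub_left φ 1
    _ = ∫ t in ρ..(1-ρ), φ t := by norm_num
    _ = ∫ t in Icc ρ (1-ρ), φ t := by
        rw [MeasureTheory.integral_Icc_eq_integral_Ioc,
          ← intervalIntegral.integral_of_le hr2]
    _ ≤ 2 := main

lemma dim_reduce (n : ℕ) (i : Fin (n+1)) (f : (Fin (n+1) → ℝ) → ℝ)
    (hf : ConvexOn ℝ (Set.Icc (0 : Fin (n+1) → ℝ) 1) f)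
    (hfb : ∀ x ∈ Set.Icc (0 : Fin (n+1) → ℝ) 1, |f x| ≤ 1)
    {ρ : ℝ} (hρ : 0 < ρ) (hρ2 : ρ < 1/2) (σ : ℝ) (hσ : σ = ρ ∨ σ = -ρ) :
    IntegrableOn (fun x => max ((f (Function.update x i (x i + σ)) - f x)/ρ) 0)
      (Icc (fun _ => ρ) (fun _ => 1-ρ)) volume ∧
    ∫ x in Icc (fun _ => ρ : Fin (n+1) → ℝ) (fun _ => 1-ρ),
      max ((f (Function.update x i (x i + σ)) - f x)/ρ) 0 ≤ 2 := by
  have hr2 : ρ ≤ 1 - ρ := by linarith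
  set Q : Set (Fin (n+1) → ℝ) := Icc (fun _ => ρ) (fun _ => 1-ρ) with hQ
  set I : Set ℝ := Icc ρ (1-ρ) with hI
  set B : Set (Fin n → ℝ) := Icc (fun _ => ρ) (fun _ => 1-ρ) with hB
  set F : ℝ × (Fin n → ℝ) → ℝ :=
    fun p => max ((f (i.insertNth (p.1+σ) p.2) - f (i.insertNth p.1 p.2))/ρ) 0 with hF
  set e := MeasurableEquiv.piFinSuccAbove (fun _ : Fin (n+1) => ℝ) i with he
  have mp : MeasurePreserving e volume volume :=
    volume_preserving_piFinSuccAbove (fun _ : Fin (n+1) => ℝ) i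
  have heapp : ∀ x : Fin (n+1) → ℝ, e x = (x i, i.removeNth x) := fun x => rfl
  have ecomp : ∀ x : Fin (n+1) → ℝ,
      F (e x) = max ((f (Function.update x i (x i + σ)) - f x)/ρ) 0 := by
    intro x
    rw [heapp]
    simp only [hF, Fin.insertNth_removeNth, Function.update_eq_self]
  -- basic memberships
  have hmemIcc : ∀ t ∈ Icc (0:ℝ) 1, ∀ y ∈ B, i.insertNth t y ∈ Icc (0:Fin (n+1) → ℝ) 1 := by
    intro t ht y hy
    rw [Fin.insertNth_mem_Icc]
    refine ⟨by simpa using ht, ?_⟩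
    rw [hB, Set.mem_Icc, Pi.le_def, Pi.le_def] at hy
    rw [Set.mem_Icc, Pi.le_def, Pi.le_def]
    constructor <;> intro j <;> simp only [Pi.zero_apply, Pi.one_apply]
    · linarith [hy.1 j]
    · linarith [hy.2 j]
  have hσI : ∀ t ∈ I, t + σ ∈ Icc (0:ℝ) 1 := by
    intro t ht
    rw [hI, mem_Icc] at ht
    rw [mem_Icc]
    rcases hσ with rfl | rfl <;> constructor <;> linarith [ht.1, ht.2]
  have hII : I ⊆ Icc (0:ℝ) 1 := fun t ht => ⟨by linarith [ht.1], by linarith [ht.2]⟩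
  -- preimage of the product box
  have preim : e ⁻¹' (I ×ˢ B) = Q := by
    ext x
    simp only [Set.mem_preimage, heapp, Set.mem_prod, hI, hB, hQ, Set.mem_Icc, Pi.le_def,
      Fin.removeNth]
    constructor
    · rintro ⟨⟨h1, h2⟩, h3, h4⟩
      constructor <;> rw [Fin.forall_iff_succAbove i]
      · exact ⟨h1, h3⟩
      · exact ⟨h2, h4⟩
    · rintro ⟨h1, h2⟩
      exact ⟨⟨h1 i, h2 i⟩, fun j => h1 _, fun j => h2 _⟩
  have hIB : MeasurableSet (I ×ˢ B) := measurableSet_Icc.prod measurableSet_Icc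
  have hIBfin : volume (I ×ˢ B) < ⊤ :=
    (isCompact_Icc.prod isCompact_Icc).measure_lt_top
  -- continuity on an open set
  have hpiopen : IsOpen (Set.pi univ fun _ : Fin (n+1) => Ioo (0:ℝ) 1) :=
    isOpen_set_pi finite_univ fun _ _ => isOpen_Ioo
  have hpisub : (Set.pi univ fun _ : Fin (n+1) => Ioo (0:ℝ) 1) ⊆ Icc 0 1 := by
    intro x hx
    rw [Set.mem_Icc]
    exact ⟨fun j => (hx j trivial).1.le, fun j => (hx j trivial).2.le⟩
  have hfc : ContinuousOn f (Set.pi univ fun _ : Fin (n+1) => Ioo (0:ℝ) 1) :=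
    (hf.subset hpisub (convex_pi fun _ _ => convex_Ioo 0 1)).continuousOn hpiopen
  set U : Set (ℝ × (Fin n → ℝ)) :=
    ((Ioo 0 1 ∩ (fun t => t + σ) ⁻¹' Ioo 0 1) ×ˢ Set.pi univ fun _ : Fin n => Ioo (0:ℝ) 1)
    with hU
  have hUopen : IsOpen U :=
    ((isOpen_Ioo.inter (isOpen_Ioo.preimage (by continuity))).prod
      (isOpen_set_pi finite_univ fun _ _ => isOpen_Ioo))
  have hmaps : ∀ s : ℝ, MapsTo (fun p : ℝ × (Fin n → ℝ) => i.insertNth (p.1 + s) p.2)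
      {p : ℝ × (Fin n → ℝ) | p.1 + s ∈ Ioo (0:ℝ) 1 ∧ p.2 ∈ Set.pi univ fun _ : Fin n => Ioo (0:ℝ) 1}
      (Set.pi univ fun _ : Fin (n+1) => Ioo (0:ℝ) 1) := by
    intro s p hp
    rw [Set.mem_univ_pi]
    rw [Fin.forall_iff_succAbove i]
    constructor
    · simpa using hp.1
    · intro j
      simpa using hp.2 j trivial
  have hFU : ContinuousOn F U := by
    refine ContinuousOn.sup ?_ continuousOn_const
    apply ContinuousOn.div_const
    apply ContinuousOn.sub
    · refine hfc.comp (Continuous.continuousOn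
        (Continuous.finInsertNth (A := fun _ : Fin (n+1) => ℝ) i
          (continuous_fst.add continuous_const) continuous_snd)) ?_
      intro p hp
      exact hmaps σ ⟨hp.1.2, hp.2⟩
    · refine hfc.comp (Continuous.continuousOn
        (Continuous.finInsertNth (A := fun _ : Fin (n+1) => ℝ) i
          continuous_fst continuous_snd)) ?_
      intro p hp
      have := hmaps 0 (Set.mem_setOf.2 ⟨by simpa using hp.1.1, hp.2⟩)
      simpa using this
  -- null difference
  have hnull : volume ((I ×ˢ B) \ U) = 0 := by
    have hsub : (I ×ˢ B) \ U ⊆ ({ρ, 1-ρ} : Set ℝ) ×ˢ (univ : Set (Fin n → ℝ)) := by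
      rintro ⟨t, y⟩ ⟨⟨ht, hy⟩, hpU⟩
      have hy' : y ∈ Set.pi univ fun _ : Fin n => Ioo (0:ℝ) 1 := by
        rw [Set.mem_univ_pi]
        intro j
        rw [hB, Set.mem_Icc, Pi.le_def, Pi.le_def] at hy
        exact ⟨by linarith [hy.1 j], by linarith [hy.2 j]⟩
      have ht1 : t ∈ Ioo (0:ℝ) 1 := ⟨by linarith [ht.1], by linarith [ht.2]⟩
      have : t + σ ∉ Ioo (0:ℝ) 1 := by
        intro hcon
        exact hpU ⟨⟨ht1, hcon⟩, hy'⟩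
      constructor
      · rcases hσ with rfl | rfl
        · right
          rw [mem_Ioo, not_and_or, not_lt, not_lt] at this
          rcases this with h | h
          · exfalso; linarith [ht.1]
          · simp only [mem_singleton_iff]; linarith [ht.2]
        · left
          rw [mem_Ioo, not_and_or, not_lt, not_lt] at this
          rcases this with h | h
          · simp only [mem_singleton_iff]; linarith [ht.1]
          · exfalso; linarith [ht.2]
      · trivial
    refine measure_mono_null hsub ?_
    rw [Measure.volume_eq_prod, Measure.prod_prod]
    have : volume ({ρ, 1-ρ} : Set ℝ) = 0 :=
      (Set.Countable.measure_zero (by simp) _)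
    rw [this, zero_mul]
  -- measurability
  have hmeasF : AEStronglyMeasurable F (volume.restrict (I ×ˢ B)) := by
    have h1 : AEStronglyMeasurable F (volume.restrict U) :=
      hFU.aestronglyMeasurable hUopen.measurableSet
    have h2 : volume.restrict (I ×ˢ B) = volume.restrict ((I ×ˢ B) ∩ U) := by
      apply Measure.restrict_congr_set
      rw [ae_eq_set]
      constructor
      · rw [Set.diff_self_inter]; exact hnull
      · rw [Set.diff_eq_empty.2 inter_subset_left]; simp
    rw [h2]
    exact h1.mono_measure (Measure.restrict_mono inter_subset_right le_rfl)
  -- boundedness and integrability on the box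
  have hFbdd : ∀ p ∈ I ×ˢ B, ‖F p‖ ≤ 2/ρ := by
    rintro ⟨t, y⟩ ⟨ht, hy⟩
    have h1 := hfb _ (hmemIcc (t+σ) (hσI t ht) y hy)
    have h2 := hfb _ (hmemIcc t (hII ht) y hy)
    rw [hF, Real.norm_eq_abs]
    rw [abs_le]
    have h2ρ : (0:ℝ) ≤ 2/ρ := by positivity
    rw [abs_le] at h1 h2
    constructor
    · have h3 : (0:ℝ) ≤ max ((f (i.insertNth (t+σ) y) - f (i.insertNth t y))/ρ) 0 :=
        le_max_right _ _
      linarith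
    · apply max_le _ h2ρ
      rw [div_le_div_iff_of_pos_right hρ]
      linarith [h1.1, h1.2, h2.1, h2.2]
  have hFint : IntegrableOn F (I ×ˢ B) := by
    refine Integrable.mono' (g := fun _ => 2/ρ)
      (integrableOn_const hIBfin.ne) hmeasF ?_
    exact (ae_restrict_iff' hIB).2 (.of_forall hFbdd)
  -- transfer along the measurable equiv
  have mpr : MeasurePreserving e (volume.restrict Q) (volume.restrict (I ×ˢ B)) := by
    have := mp.restrict_preimage hIB
    rwa [preim] at this
  have hcompint : IntegrableOn (F ∘ e) Q :=
    (mpr.integrable_comp_emb e.measurableEmbedding).2 hFint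
  have hfun : (fun x => max ((f (Function.update x i (x i + σ)) - f x)/ρ) 0) = F ∘ e := by
    funext x
    exact (ecomp x).symm
  have hint_eq : ∫ x in Q, max ((f (Function.update x i (x i + σ)) - f x)/ρ) 0
      = ∫ p in I ×ˢ B, F p := by
    rw [show (fun x => max ((f (Function.update x i (x i + σ)) - f x)/ρ) 0) = F ∘ e from hfun]
    exact mpr.integral_comp e.measurableEmbedding F
  -- Fubini
  have hrestr : (volume : Measure (ℝ × (Fin n → ℝ))).restrict (I ×ˢ B)
      = (volume.restrict I).prod (volume.restrict B) := by
    rw [Measure.volume_eq_prod, Measure.prod_restrict]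
  have hFint' : Integrable F ((volume.restrict I).prod (volume.restrict B)) := by
    rw [← hrestr]; exact hFint
  have hBfin : volume B ≤ 1 := by
    have h1 : B ⊆ Icc 0 1 := by
      intro y hy
      rw [hB, Set.mem_Icc, Pi.le_def, Pi.le_def] at hy
      rw [Set.mem_Icc, Pi.le_def, Pi.le_def]
      constructor <;> intro j <;> simp only [Pi.zero_apply, Pi.one_apply]
      · linarith [hy.1 j]
      · linarith [hy.2 j]
    calc volume B ≤ volume (Icc (0 : Fin n → ℝ) 1) := measure_mono h1
      _ = 1 := by rw [Real.volume_Icc_pi]; simp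
  -- inner slice bound
  have hin : ∀ y ∈ B, ∫ t in I, F (t, y) ≤ 2 := by
    intro y hy
    set g : ℝ → ℝ := fun t => f (i.insertNth t y) with hg
    have hgc : ConvexOn ℝ (Icc 0 1) g := by
      refine ⟨convex_Icc 0 1, fun t1 ht1 t2 ht2 a b ha hb hab => ?_⟩
      set X : Fin (n+1) → ℝ := i.insertNth t1 y with hX
      set Y : Fin (n+1) → ℝ := i.insertNth t2 y with hY
      have h2 := hf.2 (hmemIcc t1 ht1 y hy) (hmemIcc t2 ht2 y hy) ha hb hab
      have elin : Fin.insertNth (α := fun _ => ℝ) i (a • t1 + b • t2) y = a • X + b • Y := by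
        funext j
        rcases eq_or_ne j i with rfl | hne
        · simp [hX, hY, smul_eq_mul]
        · obtain ⟨k, rfl⟩ := Fin.exists_succAbove_eq hne
          simp only [hX, hY, Fin.insertNth_apply_succAbove, Pi.add_apply, Pi.smul_apply,
            smul_eq_mul]
          linear_combination (-(y k)) * hab
      have e2 : g (a • t1 + b • t2) = f (a • X + b • Y) := congrArg f elin
      rw [e2]
      exact h2
    have hgb : ∀ t ∈ Icc (0:ℝ) 1, |g t| ≤ 1 := fun t ht => hfb _ (hmemIcc t ht y hy)
    have hFg : ∀ t : ℝ, F (t, y) = max ((g (t+σ) - g t)/ρ) 0 := fun t => rfl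
    simp_rw [hFg]
    rcases hσ with rfl | rfl
    · exact slice_fwd g hgc hgb hρ hρ2
    · simp_rw [← sub_eq_add_neg]
      exact slice_bwd g hgc hgb hρ hρ2
  -- outer bound
  have houter : ∫ p in I ×ˢ B, F p ≤ 2 := by
    rw [hrestr, integral_prod_symm F hFint']
    have hinner_int : Integrable (fun y => ∫ t, F (t, y) ∂(volume.restrict I))
        (volume.restrict B) := hFint'.integral_prod_right
    calc ∫ y in B, ∫ t in I, F (t, y) ≤ ∫ _y in B, (2:ℝ) := by
          apply integral_mono_ae hinner_int
            (integrableOn_const (lt_of_le_of_lt hBfin (by norm_num)).ne)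
          exact (ae_restrict_iff' measurableSet_Icc).2 (.of_forall hin)
      _ = (volume B).toReal * 2 := by rw [setIntegral_const]; rw [smul_eq_mul]; rfl
      _ ≤ 2 := by
          have : (volume B).toReal ≤ 1 := ENNReal.toReal_le_of_le_ofReal one_pos.le (by simpa)
          nlinarith
  constructor
  · rw [hfun]; exact hcompint
  · rw [hint_eq]; exact houter

lemma sqrt_sum_sq_le_sum_abs {k : ℕ} (a : Fin k → ℝ) :
    Real.sqrt (∑ i, (a i)^2) ≤ ∑ i, |a i| := by
  have h1 : ∑ i, (a i)^2 ≤ (∑ i, |a i|)^2 := by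
    rw [sq, Finset.sum_mul]
    refine Finset.sum_le_sum fun i _ => ?_
    rw [← sq_abs, sq]
    exact mul_le_mul_of_nonneg_left
      (Finset.single_le_sum (fun j _ => abs_nonneg (a j)) (Finset.mem_univ i)) (abs_nonneg _)
  calc Real.sqrt (∑ i, (a i)^2) ≤ Real.sqrt ((∑ i, |a i|)^2) := Real.sqrt_le_sqrt h1
    _ = ∑ i, |a i| := Real.sqrt_sq (Finset.sum_nonneg fun j _ => abs_nonneg _)

theorem integral_subgradient_norm_le (d : ℕ) (hd : 1 ≤ d)
    (f : (Fin d → ℝ) → ℝ) (m : (Fin d → ℝ) → Fin d → ℝ)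
    (hf : ConvexOn ℝ (Set.Icc (0 : Fin d → ℝ) 1) f)
    (hfb : ∀ x ∈ Set.Icc (0 : Fin d → ℝ) 1, |f x| ≤ 1)
    (hm : ∀ x : Fin d → ℝ, (∀ i, x i ∈ Set.Ioo (0:ℝ) 1) →
      ∀ z ∈ Set.Icc (0 : Fin d → ℝ) 1, f x + ∑ i, m x i * (z i - x i) ≤ f z)
    (ρ : ℝ) (hρ : 0 < ρ) (hρ2 : ρ < 1/2) :
    ∫ x in Set.Icc (fun _ => ρ : Fin d → ℝ) (fun _ => 1 - ρ),
      Real.sqrt (∑ i, (m x i) ^ 2) ≤ 8 * d := by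
  obtain ⟨n, rfl⟩ : ∃ n, d = n + 1 := ⟨d - 1, (Nat.succ_pred_eq_of_pos hd).symm⟩
  set Q : Set (Fin (n+1) → ℝ) := Icc (fun _ => ρ) (fun _ => 1-ρ) with hQdef
  set G : (Fin (n+1) → ℝ) → ℝ := fun x => ∑ i,
    (max ((f (Function.update x i (x i + ρ)) - f x)/ρ) 0
      + max ((f (Function.update x i (x i + (-ρ))) - f x)/ρ) 0) with hGdef
  have hred := fun (i : Fin (n+1)) (σ : ℝ) (hσ : σ = ρ ∨ σ = -ρ) =>
    dim_reduce n i f hf hfb hρ hρ2 σ hσ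
  have hsummand : ∀ i : Fin (n+1), IntegrableOn
      (fun x => max ((f (Function.update x i (x i + ρ)) - f x)/ρ) 0
        + max ((f (Function.update x i (x i + (-ρ))) - f x)/ρ) 0) Q := fun i =>
    ((hred i ρ (Or.inl rfl)).1.add (hred i (-ρ) (Or.inr rfl)).1)
  have hGint : IntegrableOn G Q := by
    apply MeasureTheory.integrable_finset_sum
    intro i _
    exact hsummand i
  have hGval : ∫ x in Q, G x ≤ 4 * (n+1 : ℝ) := by
    simp only [hGdef]
    rw [MeasureTheory.integral_finset_sum _ (fun i _ => hsummand i)]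
    have hterm : ∀ i : Fin (n+1),
        (∫ x in Q, (max ((f (Function.update x i (x i + ρ)) - f x)/ρ) 0
          + max ((f (Function.update x i (x i + (-ρ))) - f x)/ρ) 0)) ≤ 4 := by
      intro i
      rw [MeasureTheory.integral_add (hred i ρ (Or.inl rfl)).1 (hred i (-ρ) (Or.inr rfl)).1]
      linarith [(hred i ρ (Or.inl rfl)).2, (hred i (-ρ) (Or.inr rfl)).2]
    calc (∑ i : Fin (n+1), ∫ x in Q,
          (max ((f (Function.update x i (x i + ρ)) - f x)/ρ) 0
            + max ((f (Function.update x i (x i + (-ρ))) - f x)/ρ) 0))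
        ≤ ∑ _i : Fin (n+1), (4:ℝ) := Finset.sum_le_sum fun i _ => hterm i
      _ = 4 * (n+1 : ℝ) := by simp [mul_comm]
  have hpt : ∀ x ∈ Q, Real.sqrt (∑ i, (m x i)^2) ≤ G x := by
    intro x hx
    rw [hQdef, Set.mem_Icc, Pi.le_def, Pi.le_def] at hx
    have hxint : ∀ j, x j ∈ Ioo (0:ℝ) 1 :=
      fun j => ⟨by linarith [hx.1 j], by linarith [hx.2 j]⟩
    have habs : ∀ i, |m x i| ≤ max ((f (Function.update x i (x i + ρ)) - f x)/ρ) 0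
        + max ((f (Function.update x i (x i + (-ρ))) - f x)/ρ) 0 := by
      intro i
      have hbound : ∀ σ : ℝ, σ = ρ ∨ σ = -ρ →
          m x i * σ ≤ f (Function.update x i (x i + σ)) - f x := by
        intro σ hσ
        have hz : Function.update x i (x i + σ) ∈ Icc (0 : Fin (n+1) → ℝ) 1 := by
          have hcoord : ∀ j, 0 ≤ Function.update x i (x i + σ) j ∧
              Function.update x i (x i + σ) j ≤ 1 := by
            intro j
            rcases eq_or_ne j i with h | hne
            · rw [h, Function.update_self]
              rcases hσ with rfl | rfl <;> constructor <;> linarith [hx.1 i, hx.2 i]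
            · rw [Function.update_of_ne hne]
              constructor <;> linarith [hx.1 j, hx.2 j]
          rw [Set.mem_Icc, Pi.le_def, Pi.le_def]
          exact ⟨fun j => by simpa using (hcoord j).1, fun j => by simpa using (hcoord j).2⟩
        have := hm x hxint _ hz
        have hsum : ∑ j, m x j * (Function.update x i (x i + σ) j - x j) = m x i * σ := by
          rw [Finset.sum_eq_single i]
          · simp
          · intro j _ hne
            simp [Function.update_of_ne hne]
          · simp
        linarith [hsum ▸ this]
      have h1 : m x i ≤ (f (Function.update x i (x i + ρ)) - f x)/ρ := by
        rw [le_div_iff₀ hρ]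
        exact hbound ρ (Or.inl rfl)
      have h2 : -(m x i) ≤ (f (Function.update x i (x i + (-ρ))) - f x)/ρ := by
        rw [le_div_iff₀ hρ]
        have := hbound (-ρ) (Or.inr rfl)
        linarith
      have hA := le_max_left ((f (Function.update x i (x i + ρ)) - f x)/ρ) 0
      have hA0 := le_max_right ((f (Function.update x i (x i + ρ)) - f x)/ρ) 0
      have hB := le_max_left ((f (Function.update x i (x i + (-ρ))) - f x)/ρ) 0
      have hB0 := le_max_right ((f (Function.update x i (x i + (-ρ))) - f x)/ρ) 0
      rw [abs_le]
      constructor <;> [skip; skip] <;> linarith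
    calc Real.sqrt (∑ i, (m x i)^2) ≤ ∑ i, |m x i| := sqrt_sum_sq_le_sum_abs _
      _ ≤ G x := Finset.sum_le_sum fun i _ => habs i
  have hfinal := MeasureTheory.integral_mono_of_nonneg
    (f := fun x => Real.sqrt (∑ i, (m x i)^2)) (g := G) (μ := volume.restrict Q)
    (Filter.Eventually.of_forall fun x => Real.sqrt_nonneg _) hGint
    ((ae_restrict_iff' measurableSet_Icc).2 (Filter.Eventually.of_forall hpt))
  have : (4 : ℝ) * (n+1 : ℝ) ≤ 8 * ((n:ℝ)+1) := by nlinarith [Nat.cast_nonneg (α := ℝ) n]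
  push_cast
  linarith [hfinal, hGval]
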